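/- Let L_n = ∂_xⁿ + Σ_{i≤n−2} u_i ∂_x^i be a monic ordinary differential operator and ψ(x,k) = e^{kx}(1 + Σ_{s≥1} ξ_s(x)k^{−s}) the formal wave solution of L_n ψ = kⁿ ψ normalized by ξ_s(0) = 0. If L_m is any differential operator commuting with L_n, then there exists a formal Laurent series a(k) = k^m + Σ_{s ≥ −m+1} a_s k^{−s} with constant coefficients such that L_m ψ = a(k) ψ. -/

import Mathlib

/-!
STATEMENT 16: Let L_n = ∂ⁿ + Σ_{i≤n−2} u_i ∂^i be monic and ψ = e^{kx}(1 + Σ ξ_s k^{−s})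
the formal wave solution of L_n ψ = kⁿψ normalized by ξ_s(0) = 0.  If L_m is any
differential operator commuting with L_n (of order m, with leading coefficient 1),
then there is a formal Laurent series a(k) = k^m + Σ_{s≥−m+1} a_s k^{−s} with constant
coefficients such that L_m ψ = a(k)ψ.

Pseudodifferential operators `(N, c)` represent `Σ c s ∂^{N-s}` with formal power
series coefficients.  Writing ψ = Φe^{kx} with Φ = Σ ξ_s ∂^{−s}, the equation
L_nψ = kⁿψ reads L_n∘Φ = Φ∘∂ⁿ and the conclusion L_mψ = a(k)ψ reads
L_m∘Φ = Φ∘a(∂) for a constant-coefficient pseudodifferential operator a(∂).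
-/

noncomputable section

def PsDO : Type := ℤ × (ℕ → PowerSeries ℂ)

namespace PsDO

def gbin (n : ℤ) (j : ℕ) : ℂ :=
  (∏ i ∈ Finset.range j, ((n : ℂ) - (i : ℂ))) / (j.factorial : ℂ)

def coeffAt (A : PsDO) (n : ℤ) : PowerSeries ℂ :=
  if n ≤ A.1 then A.2 (A.1 - n).toNat else 0

def mul (A B : PsDO) : PsDO :=
  (A.1 + B.1, fun t => ∑ s ∈ Finset.range (t + 1), ∑ j ∈ Finset.range (t + 1 - s),
    A.2 s * PowerSeries.C (gbin (A.1 - s) j) *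
      (PowerSeries.derivativeFun)^[j] (B.2 (t - s - j)))

def one : PsDO := (0, fun s => if s = 0 then 1 else 0)

def Dx : PsDO := (1, fun s => if s = 0 then 1 else 0)

def pow (A : PsDO) (n : ℕ) : PsDO := (mul A)^[n] one

end PsDO

open PsDO

open Finset PowerSeries

local notation "D" => PowerSeries.derivativeFun (R := ℂ)
local notation "Cc" => PowerSeries.C (R := ℂ)

lemma gbin_eq_choose (n : ℤ) (j : ℕ) : gbin n j = Ring.choose (n : ℂ) j := by
  have h1 : (descPochhammer ℤ j).smeval (n : ℂ) = ∏ i ∈ Finset.range j, ((n : ℂ) - (i : ℂ)) := by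
    induction j with
    | zero => simp [descPochhammer_zero, Polynomial.smeval_one]
    | succ k ih =>
      rw [descPochhammer_succ_right, Polynomial.smeval_mul, ih, Finset.prod_range_succ]
      congr 1
      simp [Polynomial.smeval_sub, Polynomial.smeval_X, Polynomial.smeval_natCast]
  have h2 := Ring.descPochhammer_eq_factorial_smul_choose (R := ℂ) (n : ℂ) j
  rw [h1] at h2
  rw [gbin, h2, nsmul_eq_mul]
  field_simp [Nat.factorial_ne_zero]

lemma gbin_zero_right (n : ℤ) : gbin n 0 = 1 := by simp [gbin]

lemma gbin_zero_left (j : ℕ) (hj : j ≠ 0) : gbin 0 j = 0 := by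
  rw [gbin]
  rw [Finset.prod_eq_zero (Finset.mem_range.mpr (Nat.pos_of_ne_zero hj)) (by simp)]
  simp

lemma gbin_one (n : ℤ) : gbin n 1 = (n : ℂ) := by simp [gbin]

lemma gbin_split (x : ℤ) (i i' : ℕ) :
    ((i + i').choose i : ℂ) * gbin x (i + i') = gbin x i * gbin (x - i) i' := by
  have h := Ring.choose_smul_choose (R := ℂ) (x : ℂ) (Nat.le_add_right i i')
  rw [nsmul_eq_mul] at h
  rw [gbin_eq_choose, gbin_eq_choose, gbin_eq_choose, h, Nat.add_sub_cancel_left]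
  norm_num

lemma gbin_vandermonde (x y : ℤ) (J : ℕ) :
    ∑ ij ∈ Finset.HasAntidiagonal.antidiagonal J, gbin x ij.1 * gbin y ij.2 = gbin (x + y) J := by
  have h := Ring.add_choose_eq (R := ℂ) (r := (x : ℂ)) (s := (y : ℂ)) J (Commute.all _ _)
  simp only [gbin_eq_choose]
  push_cast
  rw [h]

def Dhom : PowerSeries ℂ →+ PowerSeries ℂ := AddMonoidHom.mk' D derivativeFun_add

lemma Dhom_apply (x : PowerSeries ℂ) : Dhom x = D x := rfl

lemma Dit_zero (j : ℕ) : D^[j] (0 : PowerSeries ℂ) = 0 := by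
  induction j with
  | zero => rfl
  | succ k ih => rw [Function.iterate_succ_apply, ← Dhom_apply, map_zero, ih]

lemma Dit_add (j : ℕ) (x y : PowerSeries ℂ) : D^[j] (x + y) = D^[j] x + D^[j] y := by
  induction j generalizing x y with
  | zero => rfl
  | succ k ih => rw [Function.iterate_succ_apply, derivativeFun_add, ih,
      ← Function.iterate_succ_apply, ← Function.iterate_succ_apply]

lemma Dit_sum {α : Type*} (s : Finset α) (f : α → PowerSeries ℂ) (j : ℕ) :
    D^[j] (∑ a ∈ s, f a) = ∑ a ∈ s, D^[j] (f a) := by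
  classical
  induction s using Finset.induction with
  | empty => simp [Dit_zero]
  | insert a s h ih => rw [Finset.sum_insert h, Dit_add, ih, Finset.sum_insert h]

lemma D_C_mul (c : ℂ) (x : PowerSeries ℂ) : D (Cc c * x) = Cc c * D x := by
  rw [derivativeFun_mul, show D (Cc c) = 0 from PowerSeries.derivative_C]
  simp [smul_eq_mul, mul_comm]

lemma Dit_C_mul (j : ℕ) (c : ℂ) (x : PowerSeries ℂ) : D^[j] (Cc c * x) = Cc c * D^[j] x := by
  induction j generalizing x with
  | zero => rfl
  | succ k ih => rw [Function.iterate_succ_apply, D_C_mul, ih, ← Function.iterate_succ_apply]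

lemma Dit_C (j : ℕ) (c : ℂ) (hj : j ≠ 0) : D^[j] (Cc c) = 0 := by
  obtain ⟨k, rfl⟩ := Nat.exists_eq_succ_of_ne_zero hj
  rw [Function.iterate_succ_apply, show D (Cc c) = 0 from PowerSeries.derivative_C, Dit_zero]

lemma Dit_one (j : ℕ) (hj : j ≠ 0) : D^[j] (1 : PowerSeries ℂ) = 0 := by
  rw [← map_one Cc, Dit_C j 1 hj]

lemma D_nsmul (k : ℕ) (x : PowerSeries ℂ) : D (k • x) = k • D x := by
  rw [← Dhom_apply, map_nsmul, Dhom_apply]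

lemma D_mul' (x y : PowerSeries ℂ) : D (x * y) = x * D y + y * D x := by
  rw [derivativeFun_mul, smul_eq_mul, smul_eq_mul]

lemma D_mul'' (x y : PowerSeries ℂ) : D (x * y) = D x * y + x * D y := by
  rw [D_mul']; ring

/-- Iterated Leibniz rule. -/
lemma Dit_mul (n : ℕ) (x y : PowerSeries ℂ) :
    D^[n] (x * y) = ∑ k ∈ range (n + 1), n.choose k • (D^[n - k] x * D^[k] y) := by
  induction n with
  | zero => simp [Finset.range]
  | succ n IH =>
    calc
      D^[n + 1] (x * y) =
          D (∑ k ∈ range (n + 1), n.choose k • (D^[n - k] x * D^[k] y)) := by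
        rw [Function.iterate_succ_apply', IH]
      _ = (∑ k ∈ range (n + 1), n.choose k • (D^[n - k + 1] x * D^[k] y)) +
          ∑ k ∈ range (n + 1), n.choose k • (D^[n - k] x * D^[k + 1] y) := by
        rw [← Dhom_apply, map_sum]
        simp_rw [Dhom_apply, D_nsmul, D_mul'', Function.iterate_succ_apply',
          smul_add, sum_add_distrib]
      _ = (∑ k ∈ range (n + 1),
                n.choose (k + 1) • (D^[n - k] x * D^[k + 1] y)) +
              1 • (D^[n + 1] x * D^[0] y) +
            ∑ k ∈ range (n + 1), n.choose k • (D^[n - k] x * D^[k + 1] y) := ?_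
      _ = ((∑ k ∈ range (n + 1), n.choose k • (D^[n - k] x * D^[k + 1] y)) +
              ∑ k ∈ range (n + 1),
                n.choose (k + 1) • (D^[n - k] x * D^[k + 1] y)) +
            1 • (D^[n + 1] x * D^[0] y) := by
        rw [add_comm, add_assoc]
      _ = (∑ i ∈ range (n + 1),
              (n + 1).choose (i + 1) • (D^[n + 1 - (i + 1)] x * D^[i + 1] y)) +
            1 • (D^[n + 1] x * D^[0] y) := by
        simp_rw [Nat.choose_succ_succ, Nat.succ_sub_succ, add_smul, sum_add_distrib]
      _ = ∑ k ∈ range (n + 1 + 1),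
            (n + 1).choose k • (D^[n + 1 - k] x * D^[k] y) := by
        rw [sum_range_succ' _ (n + 1), Nat.choose_zero_right, tsub_zero, one_smul]
    congr
    refine (sum_range_succ' _ _).trans (congr_arg₂ (· + ·) ?_ ?_)
    · rw [sum_range_succ, Nat.choose_succ_self, zero_smul, add_zero]
      refine sum_congr rfl fun k hk => ?_
      rw [mem_range] at hk
      congr
      omega
    · rw [Nat.choose_zero_right, tsub_zero]

section Reshuffle
variable {M : Type*} [AddCommMonoid M]

lemma regroup3 (t : ℕ) (F : ℕ → ℕ → ℕ → M) :
    ∑ x ∈ antidiagonal t, ∑ y ∈ antidiagonal x.1, F y.1 y.2 x.2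
    = ∑ x ∈ antidiagonal t, ∑ y ∈ antidiagonal x.2, F x.1 y.1 y.2 := by
  rw [Finset.sum_sigma', Finset.sum_sigma']
  refine Finset.sum_nbij' (fun p => ⟨(p.2.1, p.2.2 + p.1.2), (p.2.2, p.1.2)⟩)
    (fun p => ⟨(p.1.1 + p.2.1, p.2.2), (p.1.1, p.2.1)⟩) ?_ ?_ ?_ ?_ ?_ <;>
    rintro ⟨⟨a, b⟩, ⟨c, d⟩⟩ hp <;>
    simp only [Finset.mem_sigma, Finset.HasAntidiagonal.mem_antidiagonal, Sigma.mk.inj_iff, Prod.mk.injEq,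
      heq_eq_eq, and_true, true_and] at hp ⊢ <;> omega

lemma reshuffle5 (t : ℕ) (F : ℕ → ℕ → ℕ → ℕ → ℕ → M) :
    ∑ x ∈ antidiagonal t, ∑ w ∈ antidiagonal x.2, ∑ u ∈ antidiagonal x.1,
      ∑ v ∈ antidiagonal u.2, F u.1 v.1 v.2 w.1 w.2
    = ∑ x ∈ antidiagonal t, ∑ y ∈ antidiagonal x.2, ∑ z ∈ antidiagonal y.2,
      ∑ w ∈ antidiagonal z.2, F x.1 y.1 z.1 w.1 w.2 := by
  rw [Finset.sum_sigma', Finset.sum_sigma', Finset.sum_sigma']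
  conv_rhs => rw [Finset.sum_sigma', Finset.sum_sigma', Finset.sum_sigma']
  refine Finset.sum_nbij'
    (fun p => ⟨⟨⟨(p.1.2.1, p.2.1 + p.2.2 + p.1.1.1.2), (p.2.1, p.2.2 + p.1.1.1.2)⟩,
      (p.2.2, p.1.1.1.2)⟩, p.1.1.2⟩)
    (fun p => ⟨⟨⟨(p.1.1.1.1 + p.1.1.2.1 + p.1.2.1, p.1.2.2), p.2⟩,
      (p.1.1.1.1, p.1.1.2.1 + p.1.2.1)⟩, (p.1.1.2.1, p.1.2.1)⟩) ?_ ?_ ?_ ?_ ?_ <;>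
    rintro ⟨⟨⟨⟨a1, a2⟩, ⟨b1, b2⟩⟩, ⟨c1, c2⟩⟩, ⟨d1, d2⟩⟩ hp <;>
    simp only [Finset.mem_sigma, Finset.HasAntidiagonal.mem_antidiagonal, Sigma.mk.inj_iff, Prod.mk.injEq,
      heq_eq_eq, and_true, true_and] at hp ⊢ <;> omega

lemma reshuffle6 (t : ℕ) (G : ℕ → ℕ → ℕ → ℕ → ℕ → ℕ → M) :
    ∑ x ∈ antidiagonal t, ∑ y ∈ antidiagonal x.2, ∑ z ∈ antidiagonal y.2,
      ∑ w ∈ antidiagonal z.2, ∑ q ∈ antidiagonal y.1, G x.1 q.1 q.2 z.1 w.1 w.2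
    = ∑ x ∈ antidiagonal t, ∑ y ∈ antidiagonal x.2, ∑ z ∈ antidiagonal y.2,
      ∑ w ∈ antidiagonal z.2, ∑ q ∈ antidiagonal w.1, G x.1 y.1 q.1 z.1 q.2 w.2 := by
  rw [Finset.sum_sigma', Finset.sum_sigma', Finset.sum_sigma', Finset.sum_sigma']
  conv_rhs => rw [Finset.sum_sigma', Finset.sum_sigma', Finset.sum_sigma', Finset.sum_sigma']
  refine Finset.sum_nbij'
    (fun p => ⟨⟨⟨⟨(p.1.1.1.1.1, p.2.1 + p.1.1.2.1 + p.2.2 + p.1.2.1 + p.1.2.2),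
      (p.2.1, p.1.1.2.1 + p.2.2 + p.1.2.1 + p.1.2.2)⟩,
      (p.1.1.2.1, p.2.2 + p.1.2.1 + p.1.2.2)⟩, (p.2.2 + p.1.2.1, p.1.2.2)⟩, (p.2.2, p.1.2.1)⟩)
    (fun p => ⟨⟨⟨⟨(p.1.1.1.1.1, p.1.1.1.2.1 + p.2.1 + p.1.1.2.1 + p.2.2 + p.1.2.2),
      (p.1.1.1.2.1 + p.2.1, p.1.1.2.1 + p.2.2 + p.1.2.2)⟩,
      (p.1.1.2.1, p.2.2 + p.1.2.2)⟩, (p.2.2, p.1.2.2)⟩, (p.1.1.1.2.1, p.2.1)⟩) ?_ ?_ ?_ ?_ ?_ <;>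
    rintro ⟨⟨⟨⟨⟨a1, a2⟩, ⟨b1, b2⟩⟩, ⟨c1, c2⟩⟩, ⟨d1, d2⟩⟩, ⟨e1, e2⟩⟩ hp <;>
    simp only [Finset.mem_sigma, Finset.HasAntidiagonal.mem_antidiagonal, Sigma.mk.inj_iff, Prod.mk.injEq,
      heq_eq_eq, and_true, true_and] at hp ⊢ <;> omega

end Reshuffle

lemma Dit_mul_ad (j : ℕ) (x y : PowerSeries ℂ) :
    D^[j] (x * y) = ∑ q ∈ antidiagonal j, (j.choose q.1) • (D^[q.1] x * D^[q.2] y) := by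
  rw [Dit_mul, Finset.Nat.sum_antidiagonal_eq_sum_range_succ_mk, ← Finset.sum_range_reflect]
  refine Finset.sum_congr rfl fun k hk => ?_
  rw [Finset.mem_range] at hk
  have h1 : j + 1 - 1 - k = j - k := by omega
  have h2 : j - (j - k) = k := by omega
  rw [h1, h2, Nat.choose_symm (by omega)]

-- ===== mulFun =====

def mulFun (d : ℤ) (f g : ℕ → PowerSeries ℂ) : ℕ → PowerSeries ℂ := fun t =>
  ∑ s ∈ Finset.range (t + 1), ∑ j ∈ Finset.range (t + 1 - s),
    f s * Cc (gbin (d - s) j) * D^[j] (g (t - s - j))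

lemma mulFun_ad (d : ℤ) (f g : ℕ → PowerSeries ℂ) (t : ℕ) :
    mulFun d f g t = ∑ x ∈ antidiagonal t, ∑ y ∈ antidiagonal x.2,
      f x.1 * Cc (gbin (d - x.1) y.1) * D^[y.1] (g y.2) := by
  simp only [mulFun]
  rw [Finset.Nat.sum_antidiagonal_eq_sum_range_succ_mk]
  refine Finset.sum_congr rfl fun s hs => ?_
  rw [Finset.mem_range] at hs
  rw [Finset.Nat.sum_antidiagonal_eq_sum_range_succ_mk, show t + 1 - s = t - s + 1 by omega]

theorem mulFun_assoc (a b : ℤ) (f g h : ℕ → PowerSeries ℂ) :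
    mulFun (a + b) (mulFun a f g) h = mulFun a f (mulFun b g h) := by
  funext t
  have NFeq : mulFun (a + b) (mulFun a f g) h t
      = ∑ x ∈ antidiagonal t, ∑ y ∈ antidiagonal x.2, ∑ z ∈ antidiagonal y.2,
        ∑ w ∈ antidiagonal z.2,
          Cc (gbin (a - x.1) y.1 * gbin (a + b - ((x.1 : ℤ) + y.1 + z.1)) w.1) *
            (f x.1 * (D^[y.1] (g z.1) * D^[w.1] (h w.2))) := by
    rw [mulFun_ad]
    calc
      ∑ x ∈ antidiagonal t, ∑ y ∈ antidiagonal x.2,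
          mulFun a f g x.1 * Cc (gbin (a + b - x.1) y.1) * D^[y.1] (h y.2)
        = ∑ x ∈ antidiagonal t, ∑ y ∈ antidiagonal x.2, ∑ u ∈ antidiagonal x.1,
            ∑ v ∈ antidiagonal u.2,
            Cc (gbin (a - u.1) v.1 * gbin (a + b - ((u.1 : ℤ) + v.1 + v.2)) y.1) *
              (f u.1 * (D^[v.1] (g v.2) * D^[y.1] (h y.2))) := by
        refine Finset.sum_congr rfl fun x hx => Finset.sum_congr rfl fun y hy => ?_
        rw [mulFun_ad, Finset.sum_mul, Finset.sum_mul]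
        refine Finset.sum_congr rfl fun u hu => ?_
        rw [Finset.sum_mul, Finset.sum_mul]
        refine Finset.sum_congr rfl fun v hv => ?_
        rw [Finset.HasAntidiagonal.mem_antidiagonal] at hx hy hu hv
        rw [show (x.1 : ℤ) = (u.1 : ℤ) + v.1 + v.2 by push_cast [← hu, ← hv]; ring, map_mul]
        ring
      _ = _ := by
        exact reshuffle5 t (fun s1 i s2 J r =>
          Cc (gbin (a - s1) i * gbin (a + b - ((s1 : ℤ) + i + s2)) J) *
            (f s1 * (D^[i] (g s2) * D^[J] (h r))))
  rw [NFeq, mulFun_ad]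
  calc
    ∑ x ∈ antidiagonal t, ∑ y ∈ antidiagonal x.2, ∑ z ∈ antidiagonal y.2,
        ∑ w ∈ antidiagonal z.2,
          Cc (gbin (a - x.1) y.1 * gbin (a + b - ((x.1 : ℤ) + y.1 + z.1)) w.1) *
            (f x.1 * (D^[y.1] (g z.1) * D^[w.1] (h w.2)))
      = ∑ x ∈ antidiagonal t, ∑ y ∈ antidiagonal x.2, ∑ z ∈ antidiagonal y.2,
          ∑ w ∈ antidiagonal z.2, ∑ q ∈ antidiagonal w.1,
          Cc (gbin (a - x.1) y.1 * gbin (a - (x.1 : ℤ) - y.1) q.1 * gbin (b - z.1) q.2) *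
            (f x.1 * (D^[y.1] (g z.1) * D^[q.1 + q.2] (h w.2))) := by
      refine Finset.sum_congr rfl fun x hx => Finset.sum_congr rfl fun y hy =>
        Finset.sum_congr rfl fun z hz => Finset.sum_congr rfl fun w hw => ?_
      have key : ∑ q ∈ antidiagonal w.1,
          Cc (gbin (a - x.1) y.1 * gbin (a - (x.1 : ℤ) - y.1) q.1 * gbin (b - z.1) q.2) *
            (f x.1 * (D^[y.1] (g z.1) * D^[q.1 + q.2] (h w.2)))
          = ∑ q ∈ antidiagonal w.1,
          Cc (gbin (a - x.1) y.1 * (gbin (a - (x.1 : ℤ) - y.1) q.1 * gbin (b - z.1) q.2)) *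
            (f x.1 * (D^[y.1] (g z.1) * D^[w.1] (h w.2))) := by
        refine Finset.sum_congr rfl fun q hq => ?_
        rw [Finset.HasAntidiagonal.mem_antidiagonal] at hq
        rw [hq, mul_assoc]
      rw [key, ← Finset.sum_mul, ← map_sum, ← Finset.mul_sum, gbin_vandermonde,
        show a - (x.1 : ℤ) - y.1 + (b - z.1) = a + b - ((x.1 : ℤ) + y.1 + z.1) by ring]
    _ = ∑ x ∈ antidiagonal t, ∑ y ∈ antidiagonal x.2, ∑ z ∈ antidiagonal y.2,
          ∑ w ∈ antidiagonal z.2, ∑ q ∈ antidiagonal y.1,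
          Cc (gbin (a - x.1) q.1 * gbin (a - (x.1 : ℤ) - q.1) q.2 * gbin (b - z.1) w.1) *
            (f x.1 * (D^[q.1] (g z.1) * D^[q.2 + w.1] (h w.2))) := by
      exact (reshuffle6 t (fun s1 i i' s2 j2 r =>
        Cc (gbin (a - s1) i * gbin (a - (s1 : ℤ) - i) i' * gbin (b - s2) j2) *
          (f s1 * (D^[i] (g s2) * D^[i' + j2] (h r))))).symm
    _ = ∑ x ∈ antidiagonal t, ∑ y ∈ antidiagonal x.2,
          f x.1 * Cc (gbin (a - x.1) y.1) * D^[y.1] (mulFun b g h y.2) := by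
      refine (Finset.sum_congr rfl fun x hx => Finset.sum_congr rfl fun y hy => ?_).symm
      rw [mulFun_ad]
      simp only [Dit_sum, Finset.mul_sum]
      refine Finset.sum_congr rfl fun z hz => Finset.sum_congr rfl fun w hw => ?_
      rw [mul_assoc (g z.1), Dit_mul_ad]
      simp only [Dit_C_mul, ← Function.iterate_add_apply, Finset.mul_sum]
      refine Finset.sum_congr rfl fun q hq => ?_
      rw [Finset.HasAntidiagonal.mem_antidiagonal] at hq
      rw [← hq]
      rw [nsmul_eq_mul, ← map_natCast Cc ((q.1 + q.2).choose q.1)]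
      have hs' : Cc (((q.1 + q.2).choose q.1 : ℕ) : ℂ) * Cc (gbin (a - x.1) (q.1 + q.2))
          = Cc (gbin (a - x.1) q.1) * Cc (gbin (a - (x.1 : ℤ) - q.1) q.2) := by
        rw [← map_mul, ← map_mul, gbin_split]
      rw [map_mul, map_mul]
      linear_combination (f x.1 * D^[q.1] (g z.1) * Cc (gbin (b - z.1) w.1)
        * D^[q.2 + w.1] (h w.2)) * hs'

def e0 : ℕ → PowerSeries ℂ := fun s => if s = 0 then 1 else 0

lemma mul_eq (A B : PsDO) : mul A B = (A.1 + B.1, mulFun A.1 A.2 B.2) := rfl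

lemma Dit_e0 (j r : ℕ) (hj : j ≠ 0) : D^[j] (e0 r) = 0 := by
  unfold e0
  split_ifs
  · exact Dit_one j hj
  · exact Dit_zero j

lemma mulFun_e0_right (d : ℤ) (f : ℕ → PowerSeries ℂ) : mulFun d f e0 = f := by
  funext t
  simp only [mulFun]
  rw [Finset.sum_eq_single_of_mem t (Finset.mem_range.mpr (by omega))]
  · rw [Finset.sum_eq_single_of_mem 0 (Finset.mem_range.mpr (by omega))]
    · simp [gbin_zero_right, e0]
    · intro j hj hjne
      rw [Finset.mem_range] at hj
      have : ¬ (t - t - j = 0) → False := by omega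
      rw [show t - t - j = 0 by omega, Dit_e0 j 0 hjne, mul_zero]
  · intro s hs hsne
    rw [Finset.mem_range] at hs
    apply Finset.sum_eq_zero
    intro j hj
    rw [Finset.mem_range] at hj
    by_cases hz : t - s - j = 0
    · have hjne : j ≠ 0 := by omega
      rw [hz, Dit_e0 j 0 hjne, mul_zero]
    · rw [show e0 (t - s - j) = 0 by simp [e0, hz], Dit_zero, mul_zero]

lemma mulFun_e0_left (d : ℤ) (g : ℕ → PowerSeries ℂ) (t : ℕ) :
    mulFun d e0 g t = ∑ j ∈ Finset.range (t + 1), Cc (gbin d j) * D^[j] (g (t - j)) := by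
  simp only [mulFun]
  rw [Finset.sum_eq_single_of_mem 0 (Finset.mem_range.mpr (by omega))]
  · refine Finset.sum_congr (by norm_num) fun j hj => ?_
    simp [e0]
  · intro s hs hsne
    apply Finset.sum_eq_zero
    intro j hj
    simp [e0, hsne]

lemma pow_Dx (n : ℕ) : pow Dx n = ((n : ℤ), e0) := by
  induction n with
  | zero => rfl
  | succ k ih =>
    show (mul Dx)^[k + 1] one = _
    rw [Function.iterate_succ_apply']
    show mul Dx (pow Dx k) = _
    rw [mul_eq, ih]; dsimp only
    have h2 : mulFun Dx.1 Dx.2 e0 = e0 := by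
      funext t
      have : Dx.2 = e0 := rfl
      rw [this]
      rw [show Dx.1 = (1 : ℤ) from rfl, mulFun_e0_left]
      rw [Finset.sum_eq_single_of_mem 0 (Finset.mem_range.mpr (by omega))]
      · simp [gbin_zero_right]
      · intro j hj hjne
        rw [Dit_e0 _ _ hjne, mul_zero]
    rw [h2]
    show ((1 + (k : ℤ), e0) : PsDO) = _
    rw [show (1 + (k : ℤ)) = ((k + 1 : ℕ) : ℤ) by push_cast; ring]

-- ===== cancellation =====

lemma mulFun_zero_split (ξ : ℕ → PowerSeries ℂ) (hξ0 : ξ 0 = 1) (Z : ℕ → PowerSeries ℂ) (t : ℕ) :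
    mulFun 0 ξ Z t = Z t + ∑ s ∈ Finset.range t, ∑ j ∈ Finset.range (t + 1 - (s + 1)),
      ξ (s + 1) * Cc (gbin (0 - ((s + 1 : ℕ) : ℤ)) j) * D^[j] (Z (t - (s + 1) - j)) := by
  simp only [mulFun]
  rw [Finset.sum_range_succ', add_comm]
  congr 1
  rw [Finset.sum_eq_single_of_mem 0 (Finset.mem_range.mpr (by omega))]
  · simp [hξ0, gbin_zero_right]
  · intro j hj hjne
    rw [show ((0 : ℤ) - ((0 : ℕ) : ℤ)) = 0 by norm_num, gbin_zero_left j hjne, map_zero,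
      mul_zero, zero_mul]

lemma mulFun_cancel (ξ : ℕ → PowerSeries ℂ) (hξ0 : ξ 0 = 1) (X Y : ℕ → PowerSeries ℂ)
    (H : mulFun 0 ξ X = mulFun 0 ξ Y) : X = Y := by
  funext t
  induction t using Nat.strong_induction_on with
  | _ t ih =>
    have H' := congrFun H t
    rw [mulFun_zero_split ξ hξ0 X t, mulFun_zero_split ξ hξ0 Y t] at H'
    have hR : ∑ s ∈ Finset.range t, ∑ j ∈ Finset.range (t + 1 - (s + 1)),
        ξ (s + 1) * Cc (gbin (0 - ((s + 1 : ℕ) : ℤ)) j) * D^[j] (X (t - (s + 1) - j))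
        = ∑ s ∈ Finset.range t, ∑ j ∈ Finset.range (t + 1 - (s + 1)),
        ξ (s + 1) * Cc (gbin (0 - ((s + 1 : ℕ) : ℤ)) j) * D^[j] (Y (t - (s + 1) - j)) := by
      refine Finset.sum_congr rfl fun s hs => Finset.sum_congr rfl fun j hj => ?_
      rw [Finset.mem_range] at hs hj
      rw [ih (t - (s + 1) - j) (by omega)]
    rw [hR] at H'
    exact add_right_cancel H'

-- ===== constants =====

lemma const_of_D_eq_zero (x : PowerSeries ℂ) (h : D x = 0) :
    x = Cc (PowerSeries.constantCoeff x) := by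
  ext n
  cases n with
  | zero => simp
  | succ k =>
    have h1 : (PowerSeries.coeff k) (D x) = 0 := by rw [h]; simp
    rw [show D x = PowerSeries.derivative ℂ x from rfl, PowerSeries.coeff_derivative] at h1
    have h2 : (PowerSeries.coeff (k + 1)) x = 0 := by
      rcases mul_eq_zero.mp h1 with h' | h'
      · exact h'
      · exfalso; exact (Nat.cast_add_one_ne_zero k) h'
    rw [h2, PowerSeries.coeff_C]
    simp

-- ===== the key commutation consequence =====



lemma D_eq_zero_of_comm (n : ℕ) (hn : 1 ≤ n) (B : ℕ → PowerSeries ℂ)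
    (E : ∀ t : ℕ, ∑ j ∈ Finset.range (t + 1), Cc (gbin (n : ℤ) j) * D^[j] (B (t - j)) = B t) :
    ∀ t, D (B t) = 0 := by
  intro t
  induction t using Nat.strong_induction_on with
  | _ t ih =>
    have E' := E (t + 1)
    rw [Finset.sum_range_succ'] at E'
    -- E' : (∑ j ∈ range (t+1), f (j+1)) + f 0 = B (t+1)
    have hf0 : Cc (gbin (n : ℤ) 0) * D^[0] (B (t + 1 - 0)) = B (t + 1) := by
      simp [gbin_zero_right]
    rw [hf0] at E'
    have hsum : ∑ j ∈ Finset.range (t + 1),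
        Cc (gbin (n : ℤ) (j + 1)) * D^[j + 1] (B (t + 1 - (j + 1))) = 0 := by
      refine add_right_cancel (b := B (t + 1)) (c := 0) ?_
      rw [zero_add]; exact E'
    rw [Finset.sum_range_succ'] at hsum
    have hrest : ∑ j ∈ Finset.range t,
        Cc (gbin (n : ℤ) (j + 1 + 1)) * D^[j + 1 + 1] (B (t + 1 - (j + 1 + 1))) = 0 := by
      apply Finset.sum_eq_zero
      intro j hj
      rw [Finset.mem_range] at hj
      have : D^[j + 1 + 1] (B (t + 1 - (j + 1 + 1))) = 0 := by
        rw [show j + 1 + 1 = (j + 1) + 1 from rfl, Function.iterate_succ_apply,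
          ih (t + 1 - (j + 1 + 1)) (by omega), Dit_zero]
      rw [this, mul_zero]
    rw [hrest, zero_add] at hsum
    -- hsum : Cc (gbin n 1) * D^[1] (B (t+1-1)) = 0
    have h1 : Cc ((n : ℂ)) * D (B t) = 0 := by
      have : ((n : ℤ) : ℂ) = (n : ℂ) := by push_cast; ring
      simpa [gbin_one, this] using hsum
    have hne : ((n : ℂ)) ≠ 0 := Nat.cast_ne_zero.mpr (by omega)
    calc D (B t) = Cc ((n : ℂ)⁻¹) * (Cc ((n : ℂ)) * D (B t)) := by
          rw [← mul_assoc, ← map_mul, inv_mul_cancel₀ hne, map_one, one_mul]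
      _ = 0 := by rw [h1, mul_zero]

-- ===== the recursive construction =====

def Brec (ξ F : ℕ → PowerSeries ℂ) : ℕ → PowerSeries ℂ
  | t => F t - ∑ s ∈ (Finset.range (t + 1)).attach,
      ∑ j ∈ (Finset.range (t + 1 - s.1)).attach,
      if hsj : s.1 + j.1 = 0 then 0
      else ξ s.1 * Cc (gbin (0 - (s.1 : ℤ)) j.1) * D^[j.1] (Brec ξ F (t - s.1 - j.1))
  decreasing_by
    have hs := s.2; have hj := j.2
    simp only [Finset.mem_range] at hs hj
    omega

lemma Brec_eq (ξ F : ℕ → PowerSeries ℂ) (t : ℕ) :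
    Brec ξ F t = F t - ∑ s ∈ Finset.range (t + 1), ∑ j ∈ Finset.range (t + 1 - s),
      (if s + j = 0 then 0
       else ξ s * Cc (gbin (0 - (s : ℤ)) j) * D^[j] (Brec ξ F (t - s - j))) := by
  conv_lhs => rw [Brec]
  congr 1
  rw [← Finset.sum_attach (Finset.range (t + 1))]
  refine Finset.sum_congr rfl fun s _ => ?_
  rw [← Finset.sum_attach (Finset.range (t + 1 - s.1))]
  refine Finset.sum_congr rfl fun j _ => ?_
  split_ifs <;> rfl

lemma Brec_constr (ξ F : ℕ → PowerSeries ℂ) (hξ0 : ξ 0 = 1) :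
    mulFun 0 ξ (Brec ξ F) = F := by
  funext t
  have split : mulFun 0 ξ (Brec ξ F) t = Brec ξ F t
      + ∑ s ∈ Finset.range (t + 1), ∑ j ∈ Finset.range (t + 1 - s),
        (if s + j = 0 then 0
         else ξ s * Cc (gbin (0 - (s : ℤ)) j) * D^[j] (Brec ξ F (t - s - j))) := by
    simp only [mulFun]
    have hterm : ∀ s ∈ Finset.range (t + 1), ∀ j ∈ Finset.range (t + 1 - s),
        ξ s * Cc (gbin (0 - (s : ℤ)) j) * D^[j] (Brec ξ F (t - s - j))
        = (if s + j = 0 then ξ s * Cc (gbin (0 - (s : ℤ)) j) * D^[j] (Brec ξ F (t - s - j)) else 0)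
          + (if s + j = 0 then 0
             else ξ s * Cc (gbin (0 - (s : ℤ)) j) * D^[j] (Brec ξ F (t - s - j))) := by
      intro s _ j _
      split_ifs <;> simp
    calc ∑ s ∈ Finset.range (t + 1), ∑ j ∈ Finset.range (t + 1 - s),
          ξ s * Cc (gbin (0 - (s : ℤ)) j) * D^[j] (Brec ξ F (t - s - j))
        = ∑ s ∈ Finset.range (t + 1), ∑ j ∈ Finset.range (t + 1 - s),
          ((if s + j = 0 then ξ s * Cc (gbin (0 - (s : ℤ)) j) * D^[j] (Brec ξ F (t - s - j)) else 0)
          + (if s + j = 0 then 0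
             else ξ s * Cc (gbin (0 - (s : ℤ)) j) * D^[j] (Brec ξ F (t - s - j)))) := by
          refine Finset.sum_congr rfl fun s hs => Finset.sum_congr rfl fun j hj => ?_
          exact hterm s hs j hj
      _ = (∑ s ∈ Finset.range (t + 1), ∑ j ∈ Finset.range (t + 1 - s),
          (if s + j = 0 then ξ s * Cc (gbin (0 - (s : ℤ)) j) * D^[j] (Brec ξ F (t - s - j)) else 0))
          + ∑ s ∈ Finset.range (t + 1), ∑ j ∈ Finset.range (t + 1 - s),
          (if s + j = 0 then 0
           else ξ s * Cc (gbin (0 - (s : ℤ)) j) * D^[j] (Brec ξ F (t - s - j))) := by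
        rw [← Finset.sum_add_distrib]
        refine Finset.sum_congr rfl fun s hs => ?_
        rw [← Finset.sum_add_distrib]
      _ = _ := by
        congr 1
        rw [Finset.sum_eq_single_of_mem 0 (Finset.mem_range.mpr (by omega))]
        · rw [Finset.sum_eq_single_of_mem 0 (Finset.mem_range.mpr (by omega))]
          · simp [hξ0, gbin_zero_right]
          · intro j hj hjne
            rw [if_neg (by omega)]
        · intro s hs hsne
          apply Finset.sum_eq_zero
          intro j hj
          rw [if_neg (by omega)]
  rw [split, Brec_eq, sub_add_cancel]

-- ===== coeffAt glue =====

lemma coeffAt_congr (A B : PsDO) (h1 : A.1 = B.1) (h2 : A.2 = B.2) (q : ℤ) :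
    coeffAt A q = coeffAt B q := by
  unfold coeffAt
  rw [h1, h2]

lemma coeffAt_ext (A B : PsDO) (h1 : A.1 = B.1) (h : ∀ q, coeffAt A q = coeffAt B q) :
    A.2 = B.2 := by
  funext t
  have hq := h (A.1 - t)
  unfold coeffAt at hq
  rw [if_pos (by omega), ← h1, if_pos (by omega)] at hq
  have ht : (A.1 - (A.1 - (t : ℤ))).toNat = t := by omega
  rwa [ht] at hq


theorem stmt16 (n m : ℕ) (hn : 1 ≤ n)
    (Ln : PsDO) (hord : Ln.1 = (n : ℤ)) (hmonic : Ln.2 0 = 1) (hsub : Ln.2 1 = 0)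
    (hdiff : ∀ s : ℕ, Ln.1 < (s : ℤ) → Ln.2 s = 0)
    (ξ : ℕ → PowerSeries ℂ) (hξ0 : ξ 0 = 1)
    (hnorm : ∀ s : ℕ, 1 ≤ s → PowerSeries.constantCoeff (ξ s) = 0)
    (hwave : ∀ q : ℤ,
      coeffAt (mul Ln ((0 : ℤ), ξ)) q = coeffAt (mul ((0 : ℤ), ξ) (pow Dx n)) q)
    (Lm : PsDO) (hmord : Lm.1 = (m : ℤ)) (hmmonic : Lm.2 0 = 1)
    (hmdiff : ∀ s : ℕ, Lm.1 < (s : ℤ) → Lm.2 s = 0)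
    (hcomm : ∀ q : ℤ, coeffAt (mul Ln Lm) q = coeffAt (mul Lm Ln) q) :
    ∃ a : ℕ → ℂ, a 0 = 1 ∧
      ∀ q : ℤ, coeffAt (mul Lm ((0 : ℤ), ξ)) q =
        coeffAt (mul ((0 : ℤ), ξ) ((m : ℤ), fun s => PowerSeries.C (a s))) q := by
  -- translate the wave equation
  have hw2 : mulFun Ln.1 Ln.2 ξ = mulFun 0 ξ e0 := by
    refine coeffAt_ext (mul Ln ((0 : ℤ), ξ)) (mul ((0 : ℤ), ξ) ((n : ℤ), e0))
      (by show Ln.1 + 0 = 0 + (n : ℤ); omega) ?_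
    intro q
    rw [← pow_Dx]
    exact hwave q
  -- translate commutativity
  have hc2 : mulFun Ln.1 Ln.2 Lm.2 = mulFun Lm.1 Lm.2 Ln.2 :=
    coeffAt_ext (mul Ln Lm) (mul Lm Ln) (by show Ln.1 + Lm.1 = Lm.1 + Ln.1; ring) hcomm
  set F := mulFun Lm.1 Lm.2 ξ with hF
  set B := Brec ξ F with hBdef
  have hBc : mulFun 0 ξ B = F := Brec_constr ξ F hξ0
  -- the key commutation relation
  have key : mulFun (n : ℤ) e0 B = mulFun (m : ℤ) B e0 := by
    apply mulFun_cancel ξ hξ0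
    calc mulFun 0 ξ (mulFun (n : ℤ) e0 B)
        = mulFun ((0 : ℤ) + (n : ℤ)) (mulFun 0 ξ e0) B := (mulFun_assoc 0 (n : ℤ) ξ e0 B).symm
      _ = mulFun (Ln.1 + 0) (mulFun Ln.1 Ln.2 ξ) B := by
          rw [hw2, show (0 : ℤ) + (n : ℤ) = Ln.1 + 0 by omega]
      _ = mulFun Ln.1 Ln.2 (mulFun 0 ξ B) := mulFun_assoc Ln.1 0 Ln.2 ξ B
      _ = mulFun Ln.1 Ln.2 (mulFun Lm.1 Lm.2 ξ) := by rw [hBc]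
      _ = mulFun (Ln.1 + Lm.1) (mulFun Ln.1 Ln.2 Lm.2) ξ :=
          (mulFun_assoc Ln.1 Lm.1 Ln.2 Lm.2 ξ).symm
      _ = mulFun (Lm.1 + Ln.1) (mulFun Lm.1 Lm.2 Ln.2) ξ := by rw [hc2, add_comm]
      _ = mulFun Lm.1 Lm.2 (mulFun Ln.1 Ln.2 ξ) := mulFun_assoc Lm.1 Ln.1 Lm.2 Ln.2 ξ
      _ = mulFun Lm.1 Lm.2 (mulFun 0 ξ e0) := by rw [hw2]
      _ = mulFun (Lm.1 + 0) (mulFun Lm.1 Lm.2 ξ) e0 := (mulFun_assoc Lm.1 0 Lm.2 ξ e0).symm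
      _ = mulFun ((0 : ℤ) + (m : ℤ)) (mulFun 0 ξ B) e0 := by
          rw [hBc, show Lm.1 + 0 = (0 : ℤ) + (m : ℤ) by omega]
      _ = mulFun 0 ξ (mulFun (m : ℤ) B e0) := mulFun_assoc 0 (m : ℤ) ξ B e0
  -- hence all coefficients of B are constants
  have hDB : ∀ t, D (B t) = 0 := by
    refine D_eq_zero_of_comm n hn B ?_
    intro t
    rw [← mulFun_e0_left (n : ℤ) B t, key, mulFun_e0_right]
  have hBconst : ∀ t, B t = Cc (PowerSeries.constantCoeff (B t)) :=
    fun t => const_of_D_eq_zero (B t) (hDB t)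
  refine ⟨fun s => PowerSeries.constantCoeff (B s), ?_, ?_⟩
  · -- a 0 = 1
    have hB0 : B 0 = 1 := by
      have h0 := congrFun hBc 0
      have hl : mulFun 0 ξ B 0 = B 0 := by
        simp [mulFun, Finset.sum_range_one, hξ0, gbin_zero_right]
      have hr : F 0 = 1 := by
        simp [hF, mulFun, Finset.sum_range_one, hmmonic, hξ0, gbin_zero_right]
      rw [hl, hr] at h0
      exact h0
    show PowerSeries.constantCoeff (B 0) = 1
    rw [hB0]
    simp
  · -- the coefficient identity
    intro q
    have h2 : (mul Lm ((0 : ℤ), ξ)).2 = (mul ((0 : ℤ), ξ)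
        ((m : ℤ), fun s => Cc (PowerSeries.constantCoeff (B s)))).2 := by
      show F = mulFun 0 ξ (fun s => Cc (PowerSeries.constantCoeff (B s)))
      rw [show (fun s => Cc (PowerSeries.constantCoeff (B s))) = B from
        funext fun s => (hBconst s).symm, hBc]
    exact coeffAt_congr _ _ (by show Lm.1 + 0 = 0 + (m : ℤ); omega) h2 q
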